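/- Let N ≥ 2, Λ₁ = √3, Λ_i > 0 for 2 ≤ i ≤ N, and points x̃₁ = 0, x̃₂, …, x̃_N ∈ ℝ³ with |x̃₂| = 1 and |x̃_i| ≥ 1 for all i ≥ 2. Let H̃ be harmonic on the ball B₀(R) (R > 2) and suppose G̃(x) = Σ_{i=1}^N Λ_i/|x − x̃_i| + H̃(x) ≥ 0 on B₀(R) ∖ {x̃₁,…,x̃_N}. Then Σ_{i=2}^N Λ_i/|x̃_i| + H̃(0) ≥ Λ₂ − √3/R − Λ₂/(R−1). In particular, if Σ_{i=2}^N Λ_i/|x̃_i| + H̃(0) = 0 and R is large enough, a contradiction arises. -/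

import Mathlib

open Metric

open Filter Topology
open scoped RealInnerProductSpace

noncomputable section

local notation "E" => EuclideanSpace ℝ (Fin 3)

def kd1 (p x : E) : E →L[ℝ] ℝ := (-(‖x - p‖ ^ 3)⁻¹) • innerSL ℝ (x - p)

@[simp] lemma kd1_apply (p x v : E) : kd1 p x v = -((‖x - p‖ ^ 3)⁻¹ * ⟪x - p, v⟫) := by
  simp only [kd1, ContinuousLinearMap.smul_apply, innerSL_apply_apply, smul_eq_mul]; ring

lemma kernel1 (p x : E) (h : x ≠ p) :
    HasFDerivAt (fun y : E => ‖y - p‖⁻¹) (kd1 p x) x := by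
  have hxp : x - p ≠ 0 := sub_ne_zero.2 h
  have hnorm : (0:ℝ) < ‖x - p‖ := norm_pos_iff.2 hxp
  have hid : HasFDerivAt (fun y : E => y - p) (ContinuousLinearMap.id ℝ _) x :=
    (hasFDerivAt_id x).sub_const p
  have hS : HasFDerivAt (fun y : E => ⟪y - p, y - p⟫)
      ((fderivInnerCLM ℝ (x - p, x - p)).comp
        ((ContinuousLinearMap.id ℝ _).prod (ContinuousLinearMap.id ℝ _))) x :=
    hid.inner ℝ hid
  set s₀ : ℝ := ⟪x - p, x - p⟫ with hs₀
  have hs₀eq : s₀ = ‖x - p‖ ^ 2 := real_inner_self_eq_norm_sq _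
  have hs₀pos : 0 < s₀ := by rw [hs₀eq]; positivity
  have hsqrt : Real.sqrt s₀ = ‖x - p‖ := by rw [hs₀eq, Real.sqrt_sq (norm_nonneg _)]
  have hψ : HasDerivAt (fun s : ℝ => (Real.sqrt s)⁻¹)
      (-(1 / (2 * Real.sqrt s₀)) / (Real.sqrt s₀) ^ 2) s₀ :=
    (Real.hasDerivAt_sqrt hs₀pos.ne').inv (by rw [hsqrt]; exact hnorm.ne')
  have hcomp := hψ.comp_hasFDerivAt x hS
  have hfun : (fun y : E => ‖y - p‖⁻¹) = fun y : E => (Real.sqrt ⟪y - p, y - p⟫)⁻¹ := by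
    funext y
    rw [real_inner_self_eq_norm_sq, Real.sqrt_sq (norm_nonneg _)]
  rw [hfun]
  refine hcomp.congr_fderiv (Eq.symm ?_)
  ext v
  simp only [kd1, ContinuousLinearMap.smul_apply, innerSL_apply_apply,
    ContinuousLinearMap.coe_comp', Function.comp_apply, ContinuousLinearMap.prod_apply,
    ContinuousLinearMap.coe_id', id_eq, fderivInnerCLM_apply, smul_eq_mul, hsqrt]
  have h3 : ‖x - p‖ ^ 3 = ‖x - p‖ * ‖x - p‖ ^ 2 := by ring
  rw [real_inner_comm v (x - p)]
  field_simp
  ring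

def kd2 (p x u : E) : E →L[ℝ] ℝ :=
  (3 * (‖x - p‖ ^ 5)⁻¹ * ⟪x - p, u⟫) • innerSL ℝ (x - p) - (‖x - p‖ ^ 3)⁻¹ • innerSL ℝ u

@[simp] lemma kd2_apply (p x u v : E) :
    kd2 p x u v = 3 * (‖x - p‖ ^ 5)⁻¹ * ⟪x - p, u⟫ * ⟪x - p, v⟫ - (‖x - p‖ ^ 3)⁻¹ * ⟪u, v⟫ := by
  simp only [kd2, ContinuousLinearMap.sub_apply, ContinuousLinearMap.smul_apply,
    innerSL_apply_apply, smul_eq_mul]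

lemma kernel2 (p x : E) (h : x ≠ p) (u : E) :
    HasFDerivAt (fun y : E => -((‖y - p‖ ^ 3)⁻¹ * ⟪y - p, u⟫)) (kd2 p x u) x := by
  have hxp : x - p ≠ 0 := sub_ne_zero.2 h
  have hnorm : (0:ℝ) < ‖x - p‖ := norm_pos_iff.2 hxp
  have hid : HasFDerivAt (fun y : E => y - p) (ContinuousLinearMap.id ℝ _) x :=
    (hasFDerivAt_id x).sub_const p
  have hS : HasFDerivAt (fun y : E => ⟪y - p, y - p⟫)
      ((fderivInnerCLM ℝ (x - p, x - p)).comp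
        ((ContinuousLinearMap.id ℝ _).prod (ContinuousLinearMap.id ℝ _))) x :=
    hid.inner ℝ hid
  set s₀ : ℝ := ⟪x - p, x - p⟫ with hs₀
  have hs₀eq : s₀ = ‖x - p‖ ^ 2 := real_inner_self_eq_norm_sq _
  have hs₀pos : 0 < s₀ := by rw [hs₀eq]; positivity
  have hsqrt : Real.sqrt s₀ = ‖x - p‖ := by rw [hs₀eq, Real.sqrt_sq (norm_nonneg _)]
  have hsqrtne : Real.sqrt s₀ ≠ 0 := by rw [hsqrt]; exact hnorm.ne'
  -- derivative of s ↦ ((√s)^3)⁻¹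
  have hψ : HasDerivAt (fun s : ℝ => ((Real.sqrt s) ^ 3)⁻¹)
      (-(3 * Real.sqrt s₀ ^ 2 * (1 / (2 * Real.sqrt s₀))) / ((Real.sqrt s₀) ^ 3) ^ 2) s₀ :=
    ((Real.hasDerivAt_sqrt hs₀pos.ne').pow 3).inv (pow_ne_zero _ hsqrtne)
  have ha : HasFDerivAt (fun y : E => ((Real.sqrt ⟪y - p, y - p⟫) ^ 3)⁻¹)
      ((-(3 * Real.sqrt s₀ ^ 2 * (1 / (2 * Real.sqrt s₀))) / ((Real.sqrt s₀) ^ 3) ^ 2) •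
        ((fderivInnerCLM ℝ (x - p, x - p)).comp
          ((ContinuousLinearMap.id ℝ _).prod (ContinuousLinearMap.id ℝ _)))) x :=
    by have := hψ.comp_hasFDerivAt x hS; exact this
  have hfun : (fun y : E => (‖y - p‖ ^ 3)⁻¹)
      = fun y : E => ((Real.sqrt ⟪y - p, y - p⟫) ^ 3)⁻¹ := by
    funext y
    rw [real_inner_self_eq_norm_sq, Real.sqrt_sq (norm_nonneg _)]
  have ha' : HasFDerivAt (fun y : E => (‖y - p‖ ^ 3)⁻¹)
      ((-(3 * Real.sqrt s₀ ^ 2 * (1 / (2 * Real.sqrt s₀))) / ((Real.sqrt s₀) ^ 3) ^ 2) •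
        ((fderivInnerCLM ℝ (x - p, x - p)).comp
          ((ContinuousLinearMap.id ℝ _).prod (ContinuousLinearMap.id ℝ _)))) x := by
    rw [hfun]; exact ha
  have hb : HasFDerivAt (fun y : E => ⟪y - p, u⟫)
      ((fderivInnerCLM ℝ (x - p, u)).comp
        ((ContinuousLinearMap.id ℝ _).prod (0 : E →L[ℝ] E))) x :=
    hid.inner ℝ (hasFDerivAt_const u x)
  have hmul := (ha'.mul hb).neg
  refine hmul.congr_fderiv (Eq.symm ?_)
  ext v
  simp only [kd2, ContinuousLinearMap.sub_apply, ContinuousLinearMap.smul_apply,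
    innerSL_apply_apply, smul_eq_mul, ContinuousLinearMap.neg_apply, ContinuousLinearMap.add_apply,
    ContinuousLinearMap.coe_comp', Function.comp_apply, ContinuousLinearMap.prod_apply,
    ContinuousLinearMap.coe_id', id_eq, ContinuousLinearMap.zero_apply,
    fderivInnerCLM_apply, hsqrt]
  have h5 : ‖x - p‖ ^ 5 = ‖x - p‖ ^ 2 * ‖x - p‖ * (‖x - p‖ ^ 3 * ‖x - p‖ ^ 3) / ‖x - p‖ ^ 4 := by
    field_simp
  rw [real_inner_comm v (x - p), inner_zero_right, real_inner_comm v u]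
  field_simp
  ring

lemma aux1d {f g : ℝ → ℝ} {c : ℝ}
    (hf : ∀ᶠ t in 𝓝 (0:ℝ), HasDerivAt f (g t) t)
    (hg : HasDerivAt g c 0)
    (hmin : IsLocalMin f 0) : 0 ≤ c := by
  by_contra hc
  push_neg at hc
  have hf0 : HasDerivAt f (g 0) 0 := hf.self_of_nhds
  have hg0 : g 0 = 0 := by
    have := hmin.deriv_eq_zero
    rwa [hf0.deriv] at this
  have hslope : Tendsto (fun t => (g t - g 0) / t) (𝓝[≠] (0:ℝ)) (𝓝 c) := by
    have := hasDerivAt_iff_tendsto_slope.1 hg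
    have he : slope g 0 = fun t => (g t - g 0) / t := by funext t; simp [slope_def_field]
    rwa [he] at this
  have hev : ∀ᶠ t in 𝓝[>] (0:ℝ), (g t - g 0) / t < c / 2 :=
    ((hslope.mono_left (nhdsWithin_mono _ (fun t ht => ne_of_gt ht))).eventually
      (gt_mem_nhds (show c < c / 2 by linarith)))
  have hneg : ∀ᶠ t in 𝓝[>] (0:ℝ), g t < 0 := by
    filter_upwards [hev, self_mem_nhdsWithin] with t ht ht0
    rw [Set.mem_Ioi] at ht0
    rw [hg0, sub_zero, div_lt_iff₀ ht0] at ht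
    nlinarith
  rw [eventually_nhdsWithin_iff] at hneg
  rcases Metric.eventually_nhds_iff.1 (hneg.and (hf.and hmin)) with ⟨ε, hεpos, hε⟩
  set b : ℝ := ε / 2 with hb
  have hbpos : 0 < b := by positivity
  have hmem : ∀ t ∈ Set.Icc (0:ℝ) b, dist t 0 < ε := by
    intro t ht
    rw [Real.dist_eq, sub_zero, abs_of_nonneg ht.1]
    have := ht.2; simp only [hb] at *; linarith
  have hcont : ContinuousOn f (Set.Icc (0:ℝ) b) := by
    intro t ht
    exact ((hε (hmem t ht)).2.1).continuousAt.continuousWithinAt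
  have hanti : StrictAntiOn f (Set.Icc (0:ℝ) b) := by
    apply strictAntiOn_of_deriv_neg (convex_Icc _ _) hcont
    intro t ht
    rw [interior_Icc] at ht
    have h1 := hε (hmem t ⟨le_of_lt ht.1, le_of_lt ht.2⟩)
    rw [(h1.2.1).deriv]
    exact h1.1 ht.1
  have h1 : f b < f 0 := hanti (Set.left_mem_Icc.2 hbpos.le) (Set.right_mem_Icc.2 hbpos.le) hbpos
  have h2 : f 0 ≤ f b := (hε (by rw [dist_zero_right, Real.norm_eq_abs, abs_of_pos hbpos]; linarith)).2.2
  linarith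

lemma auxdir {w : EuclideanSpace ℝ (Fin 3) → ℝ} {x₀ v : EuclideanSpace ℝ (Fin 3)}
    (hw : ∀ᶠ y in 𝓝 x₀, DifferentiableAt ℝ w y)
    (hw2 : DifferentiableAt ℝ (fun y => fderiv ℝ w y v) x₀)
    (hmin : IsLocalMin w x₀) :
    0 ≤ fderiv ℝ (fun y => fderiv ℝ w y v) x₀ v := by
  set c : ℝ → EuclideanSpace ℝ (Fin 3) := fun t => x₀ + t • v with hcdef
  have hc : ∀ t : ℝ, HasDerivAt c v t := by
    intro t
    simpa [hcdef] using ((hasDerivAt_id t).smul_const v).const_add x₀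
  have hc0 : c 0 = x₀ := by simp [hcdef]
  have hccont : Continuous c := by
    apply continuous_const.add (continuous_id.smul continuous_const)
  have htend : Tendsto c (𝓝 0) (𝓝 x₀) := by
    rw [← hc0]; exact hccont.tendsto 0
  have hfev : ∀ᶠ t in 𝓝 (0:ℝ), HasDerivAt (fun s => w (c s)) (fderiv ℝ w (c t) v) t := by
    filter_upwards [htend.eventually hw] with t ht
    exact ht.hasFDerivAt.comp_hasDerivAt t (hc t)
  have hgd : HasDerivAt (fun t => fderiv ℝ w (c t) v) (fderiv ℝ (fun y => fderiv ℝ w y v) x₀ v) 0 := by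
    have h2 : HasFDerivAt (fun y => fderiv ℝ w y v) (fderiv ℝ (fun y => fderiv ℝ w y v) x₀) (c 0) := by
      rw [hc0]; exact hw2.hasFDerivAt
    exact h2.comp_hasDerivAt 0 (hc 0)
  have hminc : IsLocalMin (fun t => w (c t)) 0 := by
    have : ∀ᶠ t in 𝓝 (0:ℝ), w x₀ ≤ w (c t) := htend.eventually hmin
    simpa [IsLocalMin, IsMinFilter, hc0] using this
  exact aux1d hfev hgd hminc

lemma sum_inner_single_sq (y : EuclideanSpace ℝ (Fin 3)) :
    ∑ i : Fin 3, ⟪y, EuclideanSpace.single i (1:ℝ)⟫ ^ 2 = ‖y‖ ^ 2 := by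
  have h1 : ∀ i : Fin 3, ⟪y, EuclideanSpace.single i (1:ℝ)⟫ = y i := by
    intro i; simp [EuclideanSpace.inner_single_right]
  simp_rw [h1]
  rw [EuclideanSpace.norm_eq, Real.sq_sqrt (by positivity)]
  congr 1; funext i; rw [Real.norm_eq_abs, sq_abs]

lemma inner_single_single (i : Fin 3) :
    ⟪(EuclideanSpace.single i (1:ℝ) : EuclideanSpace ℝ (Fin 3)), EuclideanSpace.single i (1:ℝ)⟫ = 1 := by
  simp [EuclideanSpace.inner_single_right]

lemma lap_contra (R : ℝ) (t : Finset ℕ) (Λ : ℕ → ℝ) (xt : ℕ → E) (Ht : E → ℝ)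
    (ε : ℝ) (hε : 0 < ε)
    (hHsmooth : ContDiffOn ℝ 2 Ht (ball (0:E) R))
    (hHharm : ∀ x ∈ ball (0:E) R,
      (∑ i : Fin 3, fderiv ℝ (fun y => fderiv ℝ Ht y (EuclideanSpace.single i 1)) x
        (EuclideanSpace.single i 1)) = 0)
    (z₀ : E) (hz₀R : z₀ ∈ ball (0:E) R) (hz₀ne : ∀ j ∈ t, z₀ ≠ xt j)
    (hmin : IsLocalMin (fun y => (∑ j ∈ t, Λ j * ‖y - xt j‖⁻¹) + Ht y - ε * ⟪y, y⟫) z₀) :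
    False := by
  classical
  set W : E → ℝ := fun y => (∑ j ∈ t, Λ j * ‖y - xt j‖⁻¹) + Ht y - ε * ⟪y, y⟫ with hW
  set O : Set (EuclideanSpace ℝ (Fin 3)) := ball (0:E) R \ ⋃ j ∈ t, {xt j} with hO
  have hOopen : IsOpen O := by
    apply isOpen_ball.sdiff
    exact isClosed_biUnion_finset (fun j _ => isClosed_singleton)
  have hz₀O : z₀ ∈ O := by
    refine ⟨hz₀R, ?_⟩
    simp only [Set.mem_iUnion, Set.mem_singleton_iff, not_exists]
    intro j hj
    exact hz₀ne j hj
  have hOy : ∀ y ∈ O, y ∈ ball (0:E) R ∧ ∀ j ∈ t, y ≠ xt j := by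
    intro y hy
    refine ⟨hy.1, fun j hj => ?_⟩
    have := hy.2
    simp only [Set.mem_iUnion, Set.mem_singleton_iff, not_exists] at this
    exact this j hj
  have hHdiff : DifferentiableOn ℝ Ht (ball (0:E) R) :=
    hHsmooth.differentiableOn (by norm_num)
  -- the derivative of W at y ∈ O
  set DW : E → (E →L[ℝ] ℝ) := fun y =>
    ((∑ j ∈ t, Λ j • kd1 (xt j) y) + fderiv ℝ Ht y) -
      ε • ((fderivInnerCLM ℝ ((y : E), (y : E))).comp
        ((ContinuousLinearMap.id ℝ _).prod (ContinuousLinearMap.id ℝ _))) with hDW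
  have hWderiv : ∀ y ∈ O, HasFDerivAt W (DW y) y := by
    intro y hy
    obtain ⟨hyR, hyne⟩ := hOy y hy
    have h1 : HasFDerivAt (fun y : E => ∑ j ∈ t, Λ j * ‖y - xt j‖⁻¹)
        (∑ j ∈ t, Λ j • kd1 (xt j) y) y :=
      HasFDerivAt.fun_sum (fun j hj => (kernel1 (xt j) y (hyne j hj)).const_mul (Λ j))
    have h2 : HasFDerivAt Ht (fderiv ℝ Ht y) y :=
      ((hHdiff y hyR).differentiableAt (isOpen_ball.mem_nhds hyR)).hasFDerivAt
    have h3 : HasFDerivAt (fun y : E => ⟪y, y⟫)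
        ((fderivInnerCLM ℝ ((y : E), (y : E))).comp
          ((ContinuousLinearMap.id ℝ _).prod (ContinuousLinearMap.id ℝ _))) y :=
      (hasFDerivAt_id y).inner ℝ (hasFDerivAt_id y)
    exact ((h1.add h2).sub (h3.const_mul ε))
  have hwev : ∀ᶠ y in 𝓝 z₀, DifferentiableAt ℝ W y := by
    filter_upwards [hOopen.mem_nhds hz₀O] with y hy
    exact (hWderiv y hy).differentiableAt
  -- per direction analysis
  have key : ∀ i : Fin 3,
      0 ≤ fderiv ℝ (fun y => fderiv ℝ W y (EuclideanSpace.single i 1)) z₀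
          (EuclideanSpace.single i 1) ∧
      fderiv ℝ (fun y => fderiv ℝ W y (EuclideanSpace.single i 1)) z₀
          (EuclideanSpace.single i 1) =
        (∑ j ∈ t, Λ j * (3 * (‖z₀ - xt j‖ ^ 5)⁻¹ * ⟪z₀ - xt j, EuclideanSpace.single i 1⟫ ^ 2
          - (‖z₀ - xt j‖ ^ 3)⁻¹ * ⟪(EuclideanSpace.single i (1:ℝ) : E), EuclideanSpace.single i 1⟫))
        + fderiv ℝ (fun y => fderiv ℝ Ht y (EuclideanSpace.single i 1)) z₀
            (EuclideanSpace.single i 1)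
        - ε * (⟪(EuclideanSpace.single i (1:ℝ) : E), EuclideanSpace.single i 1⟫
            + ⟪(EuclideanSpace.single i (1:ℝ) : E), EuclideanSpace.single i 1⟫) := by
    intro i
    set e : E := EuclideanSpace.single i 1 with he
    set φ : E → ℝ := fun y =>
      (∑ j ∈ t, Λ j * (-((‖y - xt j‖ ^ 3)⁻¹ * ⟪y - xt j, e⟫)))
        + fderiv ℝ Ht y e - ε * (⟪y, e⟫ + ⟪e, y⟫) with hφdef
    have hev : (fun y => fderiv ℝ W y e) =ᶠ[𝓝 z₀] φ := by
      filter_upwards [hOopen.mem_nhds hz₀O] with y hy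
      rw [(hWderiv y hy).fderiv]
      simp only [hDW, hφdef, ContinuousLinearMap.sub_apply, ContinuousLinearMap.add_apply,
        ContinuousLinearMap.coe_sum', Finset.sum_apply, ContinuousLinearMap.smul_apply,
        ContinuousLinearMap.coe_comp', Function.comp_apply, ContinuousLinearMap.prod_apply,
        ContinuousLinearMap.coe_id', id_eq, fderivInnerCLM_apply, smul_eq_mul, kd1_apply]
    -- differentiability of Ht derivative part
    have hHt1 : ContDiffOn ℝ 1 (fderiv ℝ Ht) (ball (0:E) R) :=
      hHsmooth.fderiv_of_isOpen isOpen_ball (by norm_num)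
    have hHt1e : ContDiffOn ℝ 1 (fun y => fderiv ℝ Ht y e) (ball (0:E) R) :=
      hHt1.clm_apply contDiffOn_const
    have hHtd : DifferentiableAt ℝ (fun y => fderiv ℝ Ht y e) z₀ :=
      ((hHt1e.differentiableOn one_ne_zero) z₀ hz₀R).differentiableAt (isOpen_ball.mem_nhds hz₀R)
    have hQ : HasFDerivAt (fun y : E => ⟪y, e⟫ + ⟪e, y⟫)
        (((fderivInnerCLM ℝ ((z₀ : E), e)).comp
          ((ContinuousLinearMap.id ℝ _).prod (0 : E →L[ℝ] E))) +
         ((fderivInnerCLM ℝ (e, (z₀ : E))).comp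
          ((0 : E →L[ℝ] E).prod (ContinuousLinearMap.id ℝ _)))) z₀ :=
      ((hasFDerivAt_id z₀).inner ℝ (hasFDerivAt_const e z₀)).add
        ((hasFDerivAt_const e z₀).inner ℝ (hasFDerivAt_id z₀))
    have hφ : HasFDerivAt φ
        ((∑ j ∈ t, Λ j • kd2 (xt j) z₀ e) + fderiv ℝ (fun y => fderiv ℝ Ht y e) z₀
          - ε • (((fderivInnerCLM ℝ ((z₀ : E), e)).comp
              ((ContinuousLinearMap.id ℝ _).prod (0 : E →L[ℝ] E))) +
             ((fderivInnerCLM ℝ (e, (z₀ : E))).comp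
              ((0 : E →L[ℝ] E).prod (ContinuousLinearMap.id ℝ _))))) z₀ := by
      refine HasFDerivAt.sub (HasFDerivAt.add ?_ hHtd.hasFDerivAt) (hQ.const_mul ε)
      exact HasFDerivAt.fun_sum (fun j hj => (kernel2 (xt j) z₀ (hz₀ne j hj) e).const_mul (Λ j))
    have hdiff2 : DifferentiableAt ℝ (fun y => fderiv ℝ W y e) z₀ :=
      hφ.differentiableAt.congr_of_eventuallyEq hev
    have hfd : fderiv ℝ (fun y => fderiv ℝ W y e) z₀ = fderiv ℝ φ z₀ := hev.fderiv_eq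
    constructor
    · exact auxdir hwev hdiff2 hmin
    · rw [hfd, hφ.fderiv]
      simp only [ContinuousLinearMap.sub_apply, ContinuousLinearMap.add_apply,
        ContinuousLinearMap.coe_sum', Finset.sum_apply, ContinuousLinearMap.smul_apply,
        ContinuousLinearMap.coe_comp', Function.comp_apply, ContinuousLinearMap.prod_apply,
        ContinuousLinearMap.coe_id', id_eq, ContinuousLinearMap.zero_apply,
        fderivInnerCLM_apply, smul_eq_mul, kd2_apply, inner_zero_right, inner_zero_left]
      congr 1
      · congr 1
        apply Finset.sum_congr rfl
        intro j hj
        ring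
      · ring
  -- sum it up
  have hsum0 : 0 ≤ ∑ i : Fin 3,
      fderiv ℝ (fun y => fderiv ℝ W y (EuclideanSpace.single i 1)) z₀
        (EuclideanSpace.single i 1) :=
    Finset.sum_nonneg (fun i _ => (key i).1)
  have hsumeq : ∑ i : Fin 3,
      fderiv ℝ (fun y => fderiv ℝ W y (EuclideanSpace.single i 1)) z₀
        (EuclideanSpace.single i 1) = -(6 * ε) := by
    rw [Finset.sum_congr rfl (fun i _ => (key i).2)]
    simp_rw [inner_single_single]
    rw [Finset.sum_sub_distrib, Finset.sum_add_distrib, hHharm z₀ hz₀R, Finset.sum_comm]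
    have h1 : ∀ j ∈ t, ∑ i : Fin 3,
        Λ j * (3 * (‖z₀ - xt j‖ ^ 5)⁻¹ * ⟪z₀ - xt j, EuclideanSpace.single i 1⟫ ^ 2
          - (‖z₀ - xt j‖ ^ 3)⁻¹ * 1) = 0 := by
      intro j hj
      have hne : ‖z₀ - xt j‖ ≠ 0 := by
        rw [norm_ne_zero_iff, sub_ne_zero]
        exact hz₀ne j hj
      rw [← Finset.mul_sum]
      apply mul_eq_zero_of_right
      rw [Finset.sum_sub_distrib, ← Finset.mul_sum, sum_inner_single_sq]
      simp only [mul_one, Finset.sum_const, Finset.card_univ, Fintype.card_fin, nsmul_eq_mul]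
      field_simp
      ring
    rw [Finset.sum_congr rfl h1, Finset.sum_const_zero]
    simp only [Finset.sum_const, Finset.card_univ, Fintype.card_fin, nsmul_eq_mul]
    ring
  rw [hsumeq] at hsum0
  linarith

/- Euclidean estimate ruling out accumulating blow-up points: if
G̃(x) = Σ Λᵢ/|x − x̃ᵢ| + H̃(x) ≥ 0 on B₀(R) minus the poles, with x̃₀ = 0, Λ₀ = √3,
|x̃₁| = 1, |x̃ᵢ| ≥ 1 and Λᵢ > 0 for i ≥ 1, and H̃ harmonic on B₀(R), then
Σ_{i≥1} Λᵢ/|x̃ᵢ| + H̃(0) ≥ Λ₁ − √3/R − Λ₁/(R−1).  (Indices are 0-based: the paper's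
x̃₁,…,x̃_N are x̃ 0,…,x̃ (N−1) here, with N ≥ 2 poles.) -/
theorem stmt11 (N : ℕ) (hN : 2 ≤ N) (R : ℝ) (hR : 2 < R)
    (Λ : ℕ → ℝ) (xt : ℕ → EuclideanSpace ℝ (Fin 3))
    (hΛ0 : Λ 0 = Real.sqrt 3) (hx0 : xt 0 = 0)
    (hΛpos : ∀ i, 1 ≤ i → i < N → 0 < Λ i)
    (hx1 : ‖xt 1‖ = 1) (hxi : ∀ i, 1 ≤ i → i < N → 1 ≤ ‖xt i‖)
    (Ht : EuclideanSpace ℝ (Fin 3) → ℝ)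
    (hHsmooth : ContDiffOn ℝ 2 Ht (ball (0 : EuclideanSpace ℝ (Fin 3)) R))
    (hHharm : ∀ x ∈ ball (0 : EuclideanSpace ℝ (Fin 3)) R,
      (∑ i : Fin 3, fderiv ℝ (fun y => fderiv ℝ Ht y (EuclideanSpace.single i 1)) x
        (EuclideanSpace.single i 1)) = 0)
    (hGnonneg : ∀ x ∈ ball (0 : EuclideanSpace ℝ (Fin 3)) R,
      (∀ i < N, x ≠ xt i) →
      0 ≤ (∑ i ∈ Finset.range N, Λ i / ‖x - xt i‖) + Ht x) :
    Λ 1 - Real.sqrt 3 / R - Λ 1 / (R - 1) ≤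
      (∑ i ∈ Finset.Ico 1 N, Λ i / ‖xt i‖) + Ht 0 := by
  classical
  have h3 : (0:ℝ) ≤ Real.sqrt 3 := Real.sqrt_nonneg 3
  set t : Finset ℕ := Finset.Ico 2 N with ht
  have htmem : ∀ j ∈ t, 1 ≤ j ∧ j < N := by
    intro j hj; rw [ht, Finset.mem_Ico] at hj; omega
  obtain ⟨u, hu⟩ : ∃ u : EuclideanSpace ℝ (Fin 3) → ℝ,
      u = fun y => (∑ j ∈ t, Λ j * ‖y - xt j‖⁻¹) + Ht y := ⟨_, rfl⟩
  have hΛ1 : 0 < Λ 1 := hΛpos 1 le_rfl (by omega)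
  have hmain : ∀ r : ℝ, 2 < r → r < R → -Real.sqrt 3 / r - Λ 1 / (r - 1) ≤ u 0 := by
    intro r hr2 hrR
    obtain ⟨m, hm⟩ : ∃ m : ℝ, m = -Real.sqrt 3 / r - Λ 1 / (r - 1) := ⟨_, rfl⟩
    rw [← hm]
    have hsub : closedBall (0:E) r ⊆ ball (0:E) R := closedBall_subset_ball hrR
    obtain ⟨C, hC⟩ := (isCompact_closedBall (0:E) r).exists_bound_of_continuousOn
      (hHsmooth.continuousOn.mono hsub)
    have hCb : ∀ y ∈ closedBall (0:E) r, -C ≤ Ht y := by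
      intro y hy
      have := hC y hy
      rw [Real.norm_eq_abs] at this
      linarith [(abs_le.1 this).1]
    set M0 : ℝ := max (m + C) 1 with hM0
    have hM0pos : (0:ℝ) < M0 := lt_of_lt_of_le one_pos (le_max_right _ _)
    set s₀ : Finset ℝ := insert (1/2 : ℝ) (t.image fun j => Λ j / M0) with hs₀
    have hs₀ne : s₀.Nonempty := ⟨1/2, Finset.mem_insert_self _ _⟩
    set δ : ℝ := s₀.min' hs₀ne with hδ
    have hδmem : δ ∈ s₀ := s₀.min'_mem hs₀ne
    have hδpos : 0 < δ := by
      rcases Finset.mem_insert.1 hδmem with h | h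
      · rw [h]; norm_num
      · obtain ⟨j, hj, hEq⟩ := Finset.mem_image.1 h
        rw [← hEq]
        exact div_pos (hΛpos j (htmem j hj).1 (htmem j hj).2) hM0pos
    have hδhalf : δ ≤ 1/2 := Finset.min'_le _ _ (Finset.mem_insert_self _ _)
    have hδj : ∀ j ∈ t, δ ≤ Λ j / M0 := fun j hj =>
      Finset.min'_le _ _ (Finset.mem_insert_of_mem (Finset.mem_image_of_mem _ hj))
    set K : Set (EuclideanSpace ℝ (Fin 3)) :=
      closedBall (0:E) r \ ⋃ j ∈ t, ball (xt j) δ with hK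
    set V : Set (EuclideanSpace ℝ (Fin 3)) :=
      ball (0:E) r \ ⋃ j ∈ t, closedBall (xt j) δ with hV
    have hVK : V ⊆ K := Set.diff_subset_diff ball_subset_closedBall
      (Set.iUnion₂_mono fun j _ => ball_subset_closedBall)
    have hKcl : IsCompact K := (isCompact_closedBall _ _).diff
      (isOpen_biUnion fun j _ => isOpen_ball)
    have hVopen : IsOpen V := isOpen_ball.sdiff
      (isClosed_biUnion_finset fun j _ => isClosed_closedBall)
    have hKy : ∀ y ∈ K, y ∈ closedBall (0:E) r ∧ ∀ j ∈ t, δ ≤ dist y (xt j) := by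
      intro y hy
      refine ⟨hy.1, fun j hj => ?_⟩
      have := hy.2
      simp only [Set.mem_iUnion, mem_ball, not_exists] at this
      exact not_lt.1 (this j hj)
    have hKne : ∀ y ∈ K, ∀ j ∈ t, y ≠ xt j := by
      intro y hy j hj h
      have := (hKy y hy).2 j hj
      rw [h, dist_self] at this
      linarith
    have h0K : (0:E) ∈ K := by
      constructor
      · exact mem_closedBall_self (by linarith)
      · simp only [Set.mem_iUnion, mem_ball, not_exists]
        intro j hj
        have h1 : dist (0:E) (xt j) = ‖xt j‖ := by
          rw [dist_eq_norm, zero_sub, norm_neg]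
        rw [h1]
        have := hxi j (htmem j hj).1 (htmem j hj).2
        linarith
    have hbd : ∀ z ∈ K, z ∉ V → m ≤ u z := by
      intro z hzK hzV
      have hz_cb : z ∈ closedBall (0:E) r := hzK.1
      by_cases hzball : z ∈ ball (0:E) r
      · have hex : ∃ j ∈ t, z ∈ closedBall (xt j) δ := by
          by_contra hcon
          push_neg at hcon
          refine hzV ⟨hzball, ?_⟩
          simp only [Set.mem_iUnion, not_exists]
          intro j hj
          exact hcon j hj
        obtain ⟨j, hj, hzj⟩ := hex
        have hdist : dist z (xt j) = δ := le_antisymm (mem_closedBall.1 hzj) ((hKy z hzK).2 j hj)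
        have hterm : ∀ j' ∈ t, 0 ≤ Λ j' * ‖z - xt j'‖⁻¹ := by
          intro j' hj'
          exact mul_nonneg (hΛpos j' (htmem j' hj').1 (htmem j' hj').2).le (by positivity)
        have hsingle : Λ j * ‖z - xt j‖⁻¹ ≤ ∑ j' ∈ t, Λ j' * ‖z - xt j'‖⁻¹ :=
          Finset.single_le_sum hterm hj
        have hnz : ‖z - xt j‖ = δ := by rw [← dist_eq_norm]; exact hdist
        have hΛj : Λ j * δ⁻¹ = Λ j / δ := by ring
        have hM0le : M0 ≤ Λ j / δ := by
          rw [le_div_iff₀ hδpos]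
          have := hδj j hj
          rw [le_div_iff₀ hM0pos] at this
          linarith
        have hHz : -C ≤ Ht z := hCb z hz_cb
        have hmC : m + C ≤ M0 := le_max_left _ _
        rw [hnz] at hsingle
        rw [hΛj] at hsingle
        rw [hu]
        show m ≤ (∑ j' ∈ t, Λ j' * ‖z - xt j'‖⁻¹) + Ht z
        have hSS : M0 ≤ ∑ j' ∈ t, Λ j' * ‖z - xt j'‖⁻¹ := le_trans hM0le hsingle
        exact le_trans (le_trans (by linarith only [hmC] : m ≤ M0 - C)
          (sub_le_sub_right hSS C)) (by linarith only [hHz])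
      · have hzr : dist z 0 = r := le_antisymm (mem_closedBall.1 hz_cb)
          (not_lt.1 fun h => hzball (mem_ball.2 h))
        have hznorm : ‖z‖ = r := by rwa [dist_zero_right] at hzr
        have hzR : z ∈ ball (0:E) R := by
          rw [mem_ball, dist_zero_right, hznorm]; exact hrR
        have hzpole : ∀ i < N, z ≠ xt i := by
          intro i hiN h
          rcases Nat.lt_or_ge i 1 with h1 | h1
          · interval_cases i
            rw [hx0] at h
            rw [h, norm_zero] at hznorm
            linarith
          · rcases Nat.lt_or_ge i 2 with h2 | h2
            · have : i = 1 := by omega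
              rw [this] at h
              rw [h, hx1] at hznorm
              linarith
            · exact hKne z hzK i (by rw [ht, Finset.mem_Ico]; omega) h
        have hG := hGnonneg z hzR hzpole
        have hsplit : ∑ i ∈ Finset.range N, Λ i / ‖z - xt i‖ =
            Λ 0 / ‖z - xt 0‖ + (Λ 1 / ‖z - xt 1‖ + ∑ j ∈ t, Λ j / ‖z - xt j‖) := by
          rw [Finset.range_eq_Ico, Finset.sum_eq_sum_Ico_succ_bot (by omega : 0 < N),
            Finset.sum_eq_sum_Ico_succ_bot (by omega : 1 < N)]
        have hterm0 : Λ 0 / ‖z - xt 0‖ = Real.sqrt 3 / r := by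
          rw [hΛ0, hx0, sub_zero, hznorm]
        have hterm1 : Λ 1 / ‖z - xt 1‖ ≤ Λ 1 / (r - 1) := by
          apply div_le_div_of_nonneg_left hΛ1.le (by linarith)
          calc r - 1 = ‖z‖ - ‖xt 1‖ := by rw [hznorm, hx1]
            _ ≤ ‖z - xt 1‖ := norm_sub_norm_le _ _
        have hsame : ∑ j ∈ t, Λ j / ‖z - xt j‖ = ∑ j ∈ t, Λ j * ‖z - xt j‖⁻¹ := by
          apply Finset.sum_congr rfl
          intro j hj
          rw [div_eq_mul_inv]
        rw [hsplit, hterm0, hsame] at hG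
        rw [hu]
        show m ≤ (∑ j' ∈ t, Λ j' * ‖z - xt j'‖⁻¹) + Ht z
        rw [hm]
        have : -Real.sqrt 3 / r = -(Real.sqrt 3 / r) := by ring
        linarith
    have hεstep : ∀ ε : ℝ, 0 < ε → m ≤ u 0 + ε * r ^ 2 := by
      intro ε hε
      set W : E → ℝ := fun y => (∑ j ∈ t, Λ j * ‖y - xt j‖⁻¹) + Ht y - ε * ⟪y, y⟫ with hWdef
      have hWcont : ContinuousOn W K := by
        intro y hy
        have h1 : ContinuousAt (fun y : E => ∑ j ∈ t, Λ j * ‖y - xt j‖⁻¹) y := by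
          apply tendsto_finset_sum
          intro j hj
          apply continuousAt_const.mul
          apply ContinuousAt.inv₀
          · exact ((continuous_norm.comp (continuous_id.sub continuous_const)).continuousAt)
          · rw [norm_ne_zero_iff, sub_ne_zero]
            exact hKne y hy j hj
        have h2 : ContinuousWithinAt Ht K y :=
          (hHsmooth.continuousOn.mono (Set.Subset.trans Set.diff_subset hsub)) y hy
        have h3 : ContinuousAt (fun y : E => ε * ⟪y, y⟫) y :=
          (continuous_const.mul (continuous_id.inner continuous_id)).continuousAt
        exact ((h1.continuousWithinAt.add h2).sub h3.continuousWithinAt)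
      obtain ⟨z₀, hz₀K, hz₀min⟩ := hKcl.exists_isMinOn ⟨0, h0K⟩ hWcont
      by_cases hz₀V : z₀ ∈ V
      · exfalso
        have hlocmin : IsLocalMin W z₀ := hz₀min.isLocalMin
          (Filter.mem_of_superset (hVopen.mem_nhds hz₀V) hVK)
        have hz₀R : z₀ ∈ ball (0:E) R := ball_subset_ball hrR.le hz₀V.1
        exact lap_contra R t Λ xt Ht ε hε hHsmooth hHharm z₀ hz₀R
          (fun j hj => hKne z₀ (hVK hz₀V) j hj) hlocmin
      · have h1 : m ≤ u z₀ := hbd z₀ hz₀K hz₀V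
        have h2 : W z₀ ≤ W 0 := hz₀min h0K
        have h4 : ⟪z₀, z₀⟫ ≤ r ^ 2 := by
          rw [real_inner_self_eq_norm_sq]
          have : ‖z₀‖ ≤ r := by
            have := hz₀K.1
            rwa [mem_closedBall, dist_zero_right] at this
          have h0 : (0:ℝ) ≤ ‖z₀‖ := norm_nonneg _
          nlinarith
        have h5 : W 0 = u 0 := by
          rw [hWdef, hu]
          simp
        have h6 : W z₀ = u z₀ - ε * ⟪z₀, z₀⟫ := by rw [hWdef, hu]
        nlinarith
    by_contra hcon
    push_neg at hcon
    have hr0 : (0:ℝ) < r := by linarith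
    have hεp : 0 < (m - u 0) / (2 * r ^ 2) := by
      apply div_pos (by linarith) (by positivity)
    have hst := hεstep _ hεp
    have heq : (m - u 0) / (2 * r ^ 2) * r ^ 2 = (m - u 0) / 2 := by
      field_simp
    rw [heq] at hst
    generalize hgen : u 0 = p at hst hcon
    linarith only [hst, hcon]
  have hlim : -Real.sqrt 3 / R - Λ 1 / (R - 1) ≤ u 0 := by
    have htend : Tendsto (fun r : ℝ => -Real.sqrt 3 / r - Λ 1 / (r - 1)) (𝓝[<] R)
        (𝓝 (-Real.sqrt 3 / R - Λ 1 / (R - 1))) := by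
      apply Tendsto.mono_left _ nhdsWithin_le_nhds
      apply ContinuousAt.tendsto
      apply ContinuousAt.sub
      · exact continuousAt_const.div continuousAt_id (by intro h; rw [h] at hR; linarith)
      · apply continuousAt_const.div (continuousAt_id.sub continuousAt_const)
        intro h
        simp only [Pi.sub_apply, id_eq] at h
        linarith
    apply le_of_tendsto htend
    filter_upwards [Ioo_mem_nhdsLT hR] with r hr
    exact hmain r hr.1 hr.2
  have hs1 : ∑ i ∈ Finset.Ico 1 N, Λ i / ‖xt i‖ = Λ 1 + ∑ j ∈ t, Λ j / ‖xt j‖ := by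
    rw [Finset.sum_eq_sum_Ico_succ_bot (by omega : 1 < N), hx1, div_one]
  have hs2 : u 0 = (∑ j ∈ t, Λ j / ‖xt j‖) + Ht 0 := by
    rw [hu]
    show (∑ j ∈ t, Λ j * ‖(0:EuclideanSpace ℝ (Fin 3)) - xt j‖⁻¹) + Ht 0 = _
    congr 1
    apply Finset.sum_congr rfl
    intro j hj
    rw [zero_sub, norm_neg, div_eq_mul_inv]
  rw [hs2] at hlim
  rw [hs1]
  have hneg : -Real.sqrt 3 / R = -(Real.sqrt 3 / R) := by ring
  rw [hneg] at hlim
  linarith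

end
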